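/- For every r ≥ 1 and every d ≥ 2, the composite ∂∘∂ : X(r;𝔽_2)_d → X(r;𝔽_2)_{d−2} is zero; hence (X(r;𝔽_2)_*, ∂) is a chain complex over 𝔽_2. -/
import Mathlib


/-! ## Surjections, prisms and the Barratt-Eccles complex: basic definitions -/

/-- `cnt u k` is the number of occurrences of the value `k` in the sequence
`(u 0, …, u (n-1))` (written `d_k(u)` in the paper). -/
def cnt {n r : ℕ} (u : Fin n → Fin r) (k : Fin r) : ℕ :=
  (Finset.univ.filter fun i => u i = k).card

/-- `u` is nondegenerate: no two consecutive entries are equal. -/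
def Nondeg {n r : ℕ} (u : Fin n → Fin r) : Prop :=
  ∀ i : ℕ, ∀ h : i + 1 < n, u ⟨i + 1, h⟩ ≠ u ⟨i, Nat.lt_of_succ_lt h⟩

/-- `x` is a vertex of the prism of `u`: `0 ≤ x k ≤ d_k(u) - 1` for all `k`. -/
def IsVertex {n r : ℕ} (u : Fin n → Fin r) (x : Fin r → ℕ) : Prop :=
  ∀ k, x k < cnt u k

/-- `p` is a selected position of the vertex `x` of the prism of `u`, i.e. `p` is
the position of the `(x k + 1)`-st occurrence of `k = u p` in `u`. -/
def IsSel {n r : ℕ} (u : Fin n → Fin r) (x : Fin r → ℕ) (p : Fin n) : Prop :=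
  (Finset.univ.filter fun q => q < p ∧ u q = u p).card = x (u p)

instance {n r : ℕ} (u : Fin n → Fin r) (x : Fin r → ℕ) : DecidablePred (IsSel u x) :=
  fun _ => inferInstanceAs (Decidable (_ = _))

/-- `τ_u(x)` as a list: the values of `u` at the selected positions of the vertex `x`,
read in increasing order of position.  For a genuine vertex `x` this is a sequence in
which each element of `Fin r` occurs exactly once. -/
def tauList {n r : ℕ} (u : Fin n → Fin r) (x : Fin r → ℕ) : List (Fin r) :=
  ((List.finRange n).filter fun p => decide (IsSel u x p)).map u

/-- `τ_u(x)` as a function `Fin r → Fin r` (the `j`-th entry of `tauList`). -/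
def tauFun {n r : ℕ} (u : Fin n → Fin r) (x : Fin r → ℕ) (j : Fin r) : Fin r :=
  (tauList u x).getD (j : ℕ) j

open Classical in
/-- `τ_u(x)` as a permutation of `Fin r`.  For a genuine vertex `x` of the prism of a
surjection `u` the reading function `tauFun u x` is bijective and this is the
corresponding permutation. -/
noncomputable def tauPerm {n r : ℕ} (u : Fin n → Fin r) (x : Fin r → ℕ) : Equiv.Perm (Fin r) :=
  if h : Function.Bijective (tauFun u x) then Equiv.ofBijective _ h else 1

/-- A maximal chain of the prism of a surjection `u` of degree `d`: it starts at
`(0,…,0)`, ends at `(d_1(u)-1, …, d_r(u)-1)`, and each step adds `1` to exactly one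
coordinate. -/
def PrismMaxChain {r d : ℕ} (u : Fin (r + d) → Fin r) (x : Fin (d + 1) → Fin r → ℕ) : Prop :=
  (∀ k, x 0 k = 0) ∧ (∀ k, x (Fin.last d) k = cnt u k - 1) ∧
    ∀ i : Fin d, ∃ k, x i.succ = Function.update (x i.castSucc) k (x i.castSucc k + 1)

/-- The chain associated to a sequence of steps `(k_0, …, k_{d-1})`:
`x⁽⁰⁾ = (0,…,0)` and `x⁽ⁱ⁺¹⁾ = x⁽ⁱ⁾ + e_{k_i}`; in closed form, `x⁽ⁱ⁾ j` is the
number of indices `t < i` with `k t = j`. -/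
def chainOf {r d : ℕ} (k : Fin d → Fin r) : Fin (d + 1) → Fin r → ℕ :=
  fun i j => (Finset.univ.filter fun t : Fin d => (t : ℕ) < (i : ℕ) ∧ k t = j).card

/-- The caesura sequence of `u`: the sequence obtained from `(u 0, …, u (n-1))` by
deleting, for each value `k`, its last occurrence (i.e. we keep exactly the positions
having a later occurrence of the same value). -/
def caesura {n r : ℕ} (u : Fin n → Fin r) : List (Fin r) :=
  ((List.finRange n).filter fun p => decide (∃ q, p < q ∧ u q = u p)).map u

/-- The fundamental chain of `u`: the chain of steps given by the caesura sequence;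
in closed form, `fundChain u i j` is the number of occurrences of `j` among the first
`i` entries of the caesura sequence. -/
def fundChain {r d : ℕ} (u : Fin (r + d) → Fin r) : Fin (d + 1) → Fin r → ℕ :=
  fun i j => ((caesura u).take (i : ℕ)).count j

/-- The `n`-simplex `(w 0, …, w n)` of the Barratt-Eccles simplicial set `W(r)` lies in
the image of the prism of `u`. -/
def InPrism {r d n : ℕ} (u : Fin (r + d) → Fin r) (w : Fin (n + 1) → Equiv.Perm (Fin r)) :
    Prop :=
  ∃ x : Fin (n + 1) → Fin r → ℕ,
    (∀ i, IsVertex u (x i)) ∧ (∀ i : Fin n, ∀ k, x i.castSucc k ≤ x i.succ k) ∧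
      ∀ i, tauPerm u (x i) = w i

/-- `v` is a subsequence of `u`. -/
def IsSubseq {r d e : ℕ} (v : Fin (r + e) → Fin r) (u : Fin (r + d) → Fin r) : Prop :=
  ∃ φ : Fin (r + e) → Fin (r + d), StrictMono φ ∧ v = u ∘ φ

/-! ## The surjection complex `X(r; 𝔽₂)` and the Barratt-Eccles complex `C(r)` -/

/-- Basis of `X(r)_d`: nondegenerate surjections of degree `d` onto `{1,…,r}`. -/
abbrev XBasis (r d : ℕ) : Type :=
  { u : Fin (r + d) → Fin r // Function.Surjective u ∧ Nondeg u }

/-- `X(r; 𝔽₂)_d`. -/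
abbrev XMod (r d : ℕ) : Type := XBasis r d →₀ ZMod 2

open Classical in
/-- The bracket `[v] ∈ X(r; 𝔽₂)_e` of an arbitrary sequence `v`: the corresponding basis
element if `v` is a nondegenerate surjection, and `0` otherwise. -/
noncomputable def xbr (r e : ℕ) (v : Fin (r + e) → Fin r) : XMod r e :=
  if h : Function.Surjective v ∧ Nondeg v then Finsupp.single ⟨v, h⟩ 1 else 0

/-- The differential `∂ : X(r; 𝔽₂)_{d+1} → X(r; 𝔽₂)_d`,
`∂[u] = Σ_p [u ∘ δ_p]` (deletion of the `p`-th entry). -/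
noncomputable def xbnd (r d : ℕ) : XMod r (d + 1) →ₗ[ZMod 2] XMod r d :=
  Finsupp.lsum (ZMod 2) fun u => LinearMap.toSpanSingleton (ZMod 2) (XMod r d)
    (∑ p : Fin (r + d + 1), xbr r d fun i : Fin (r + d) => u.1 (p.succAbove i))

/-- Basis of `C(r)_n`: nondegenerate `n`-simplices of `W(r)`, i.e. `(n+1)`-tuples of
permutations with all consecutive entries distinct. -/
abbrev CBasis (r n : ℕ) : Type :=
  { w : Fin (n + 1) → Equiv.Perm (Fin r) // ∀ i : Fin n, w i.castSucc ≠ w i.succ }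

/-- `C(r; 𝔽₂)_n`, the normalized chains on `W(r)` with `𝔽₂` coefficients. -/
abbrev CMod (r n : ℕ) : Type := CBasis r n →₀ ZMod 2

open Classical in
/-- The bracket `[w_0,…,w_n] ∈ C(r; 𝔽₂)_n`: the corresponding basis element if the tuple
is nondegenerate, and `0` otherwise. -/
noncomputable def cbr (r n : ℕ) (w : Fin (n + 1) → Equiv.Perm (Fin r)) : CMod r n :=
  if h : ∀ i : Fin n, w i.castSucc ≠ w i.succ then Finsupp.single ⟨w, h⟩ 1 else 0

/-- The differential `δ : C(r; 𝔽₂)_{n+1} → C(r; 𝔽₂)_n`,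
`δ[w_0,…,w_{n+1}] = Σ_p [w_0,…,ŵ_p,…,w_{n+1}]`. -/
noncomputable def cbnd (r n : ℕ) : CMod r (n + 1) →ₗ[ZMod 2] CMod r n :=
  Finsupp.lsum (ZMod 2) fun w => LinearMap.toSpanSingleton (ZMod 2) (CMod r n)
    (∑ p : Fin (n + 2), cbr r n fun i : Fin (n + 1) => w.1 (p.succAbove i))

open Classical in
/-- The finite set of maximal chains of the prism of `u`.  (Every maximal chain takes
values `≤ d`, since it starts at `0` and makes `d` unit steps, so it is the image of
a `Fin (d+1)`-valued function; hence this `Finset` consists exactly of the maximal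
chains of the prism of `u`.) -/
noncomputable def maxChains {r d : ℕ} (u : Fin (r + d) → Fin r) :
    Finset (Fin (d + 1) → Fin r → ℕ) :=
  ((Finset.univ : Finset (Fin (d + 1) → Fin r → Fin (d + 1))).image
      fun y i k => (y i k : ℕ)).filter fun x => PrismMaxChain u x

/-- `TC⟨u⟩` before the surjectivity test: the sum, over all maximal chains
`(x⁽⁰⁾,…,x⁽ᵈ⁾)` of the prism of `u`, of the brackets `[τ_u(x⁽⁰⁾),…,τ_u(x⁽ᵈ⁾)]`. -/
noncomputable def TCsum (r d : ℕ) (u : Fin (r + d) → Fin r) : CMod r d :=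
  ∑ x ∈ maxChains u, cbr r d fun i => tauPerm u (x i)

open Classical in
/-- `TC⟨v⟩` for an arbitrary sequence `v`: the sum over maximal chains if `v` is
surjective, and `0` otherwise. -/
noncomputable def TCangle (r d : ℕ) (v : Fin (r + d) → Fin r) : CMod r d :=
  if Function.Surjective v then TCsum r d v else 0

/-- `TC : X(r; 𝔽₂)_d → C(r; 𝔽₂)_d` as a linear map. -/
noncomputable def TCmap (r d : ℕ) : XMod r d →ₗ[ZMod 2] CMod r d :=
  Finsupp.lsum (ZMod 2) fun u => LinearMap.toSpanSingleton (ZMod 2) (CMod r d) (TCsum r d u.1)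

/-- The action of a permutation `w` on `C(r; 𝔽₂)_d`, `w · [w_0,…,w_d] = [w∘w_0,…,w∘w_d]`. -/
noncomputable def permAct (r d : ℕ) (w : Equiv.Perm (Fin r)) (c : CMod r d) : CMod r d :=
  c.sum fun v a => a • cbr r d fun i => w * v.1 i

/-! ## Integral versions -/

/-- `C(r; ℤ)_n`, the normalized chains on `W(r)` with integer coefficients. -/
abbrev CModZ (r n : ℕ) : Type := CBasis r n →₀ ℤ

open Classical in
/-- The bracket `[w_0,…,w_n] ∈ C(r; ℤ)_n`. -/
noncomputable def cbrZ (r n : ℕ) (w : Fin (n + 1) → Equiv.Perm (Fin r)) : CModZ r n :=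
  if h : ∀ i : Fin n, w i.castSucc ≠ w i.succ then Finsupp.single ⟨w, h⟩ 1 else 0

/-- The differential `δ : C(r; ℤ)_{n+1} → C(r; ℤ)_n`,
`δ[w_0,…,w_{n+1}] = Σ_p (-1)^p [w_0,…,ŵ_p,…,w_{n+1}]`. -/
noncomputable def cbndZ (r n : ℕ) : CModZ r (n + 1) →ₗ[ℤ] CModZ r n :=
  Finsupp.lsum ℤ fun w => LinearMap.toSpanSingleton ℤ (CModZ r n)
    (∑ p : Fin (n + 2), ((-1 : ℤ) ^ (p : ℕ)) • cbrZ r n fun i : Fin (n + 1) => w.1 (p.succAbove i))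

/-- Concatenation `[v_0,…,v_i] ∗ (w_i,…,w_d)`: the `(d+2)`-tuple
`(v_0,…,v_i,w_i,w_{i+1},…,w_d)`. -/
def glue {r d : ℕ} (i : Fin (d + 1)) (v : Fin ((i : ℕ) + 1) → Equiv.Perm (Fin r))
    (w : Fin (d + 1) → Equiv.Perm (Fin r)) : Fin (d + 2) → Equiv.Perm (Fin r) :=
  fun j =>
    if h : (j : ℕ) < (i : ℕ) + 1 then v ⟨j, h⟩
    else w ⟨(j : ℕ) - 1, by have := j.isLt; omega⟩

/-- The homotopy `H` associated to a degree-preserving family of linear maps `T`: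
`H[w_0,…,w_d] = Σ_{i=0}^d (-1)^i T([w_0,…,w_i]) ∗ (w_i,…,w_d)`, extended linearly. -/
noncomputable def Hmap (r : ℕ) (T : ∀ n, CModZ r n →ₗ[ℤ] CModZ r n) (d : ℕ)
    (c : CModZ r d) : CModZ r (d + 1) :=
  c.sum fun w a => a • ∑ i : Fin (d + 1), ((-1 : ℤ) ^ (i : ℕ)) •
    ((T (i : ℕ) (cbrZ r (i : ℕ) fun j : Fin ((i : ℕ) + 1) =>
        w.1 (Fin.castLE i.isLt j))).sum
      fun v b => b • cbrZ r (d + 1) (glue i v.1 w.1))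

/-- `f` induces an isomorphism on homology in every degree (for `ℕ`-indexed chain
complexes of `𝔽₂`-vector spaces with differentials `dM`, `dN`): the induced map on
`H_0 = coker` and on `H_{n+1} = ker/im` is bijective. -/
def InducesHomologyIso {M N : ℕ → Type} [∀ n, AddCommGroup (M n)]
    [∀ n, Module (ZMod 2) (M n)] [∀ n, AddCommGroup (N n)] [∀ n, Module (ZMod 2) (N n)]
    (dM : ∀ n, M (n + 1) →ₗ[ZMod 2] M n) (dN : ∀ n, N (n + 1) →ₗ[ZMod 2] N n)
    (f : ∀ n, M n →ₗ[ZMod 2] N n) : Prop :=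
  (∀ y : N 0, ∃ c : M 0, f 0 c - y ∈ LinearMap.range (dN 0)) ∧
  (∀ c : M 0, f 0 c ∈ LinearMap.range (dN 0) → c ∈ LinearMap.range (dM 0)) ∧
  (∀ n, ∀ y ∈ LinearMap.ker (dN n), ∃ c ∈ LinearMap.ker (dM n),
      f (n + 1) c - y ∈ LinearMap.range (dN (n + 1))) ∧
  (∀ n, ∀ c ∈ LinearMap.ker (dM n), f (n + 1) c ∈ LinearMap.range (dN (n + 1)) →
      c ∈ LinearMap.range (dM (n + 1)))


lemma addSelf {M : Type*} [AddCommMonoid M] [Module (ZMod 2) M] (x : M) : x + x = 0 := by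
  rw [← two_smul (ZMod 2) x, show (2 : ZMod 2) = 0 from rfl, zero_smul]

lemma coe_succAbove {n : ℕ} (p : Fin (n+1)) (i : Fin n) :
    ((p.succAbove i) : ℕ) = if (i:ℕ) < (p:ℕ) then (i:ℕ) else (i:ℕ)+1 := by
  rw [Fin.succAbove]
  split_ifs with h h2 h3 <;> simp_all [Fin.lt_def]

/-- Key Lemma A: for a bad sequence, the sum of one-deletion brackets vanishes. -/
lemma sum_del_zero {r d : ℕ} (u : Fin (r + d + 1) → Fin r)
    (hu : ¬ (Function.Surjective u ∧ Nondeg u)) :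
    ∑ p : Fin (r + d + 1), xbr r d (fun i : Fin (r + d) => u (p.succAbove i)) = 0 := by
  by_cases hs : Function.Surjective u
  · have hnd : ¬ Nondeg u := fun h => hu ⟨hs, h⟩
    rw [Nondeg] at hnd
    push_neg at hnd
    obtain ⟨j, hj, hval⟩ := hnd
    have hj' : j < r + d + 1 := Nat.lt_of_succ_lt hj
    set J : Fin (r + d + 1) := ⟨j, hj'⟩ with hJ
    set J1 : Fin (r + d + 1) := ⟨j + 1, hj⟩ with hJ1
    have hNE : J ≠ J1 := by simp [hJ, hJ1, Fin.ext_iff]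
    have hout : ∀ p ∈ (Finset.univ : Finset (Fin (r+d+1))), p ∉ ({J, J1} : Finset (Fin (r+d+1))) →
        xbr r d (fun i : Fin (r + d) => u (p.succAbove i)) = 0 := by
      intro p _ hp
      simp only [Finset.mem_insert, Finset.mem_singleton, hJ, hJ1, Fin.ext_iff] at hp
      push_neg at hp
      obtain ⟨hp1, hp2⟩ := hp
      rw [xbr, dif_neg]
      rintro ⟨-, hnd2⟩
      by_cases hc : (p : ℕ) ≤ j
      · have hpj : (p : ℕ) < j := lt_of_le_of_ne hc hp1
        have h1 : j - 1 + 1 < r + d := by omega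
        refine hnd2 (j-1) h1 ?_
        have e1 : p.succAbove ⟨j - 1 + 1, h1⟩ = J1 := by
          apply Fin.ext; rw [coe_succAbove]
          show (if j - 1 + 1 < (p:ℕ) then j - 1 + 1 else j - 1 + 1 + 1) = j + 1
          split_ifs <;> omega
        have e2 : p.succAbove ⟨j - 1, Nat.lt_of_succ_lt h1⟩ = J := by
          apply Fin.ext; rw [coe_succAbove]
          show (if j - 1 < (p:ℕ) then j - 1 else j - 1 + 1) = j
          split_ifs <;> omega
        show u (p.succAbove ⟨j - 1 + 1, h1⟩) = u (p.succAbove ⟨j - 1, _⟩)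
        rw [e1, e2]; exact hval
      · have hpj : j + 1 < (p : ℕ) := by omega
        have h1 : j + 1 < r + d := by have := p.isLt; omega
        refine hnd2 j h1 ?_
        have e1 : p.succAbove ⟨j + 1, h1⟩ = J1 := by
          apply Fin.ext; rw [coe_succAbove]
          show (if j + 1 < (p:ℕ) then j + 1 else j + 1 + 1) = j + 1
          split_ifs <;> omega
        have e2 : p.succAbove ⟨j, Nat.lt_of_succ_lt h1⟩ = J := by
          apply Fin.ext; rw [coe_succAbove]
          show (if j < (p:ℕ) then j else j + 1) = j
          split_ifs <;> omega
        show u (p.succAbove ⟨j + 1, h1⟩) = u (p.succAbove ⟨j, _⟩)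
        rw [e1, e2]; exact hval
    rw [← Finset.sum_subset (Finset.subset_univ ({J, J1} : Finset (Fin (r+d+1)))) hout]
    rw [Finset.sum_pair hNE]
    have hfun : (fun i : Fin (r + d) => u (J.succAbove i)) =
        (fun i : Fin (r + d) => u (J1.succAbove i)) := by
      funext i
      by_cases hij : (i : ℕ) = j
      · have e1 : J.succAbove i = J1 := by
          apply Fin.ext; rw [coe_succAbove]
          show (if (i:ℕ) < j then (i:ℕ) else (i:ℕ) + 1) = j + 1
          split_ifs <;> omega
        have e2 : J1.succAbove i = J := by
          apply Fin.ext; rw [coe_succAbove]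
          show (if (i:ℕ) < j + 1 then (i:ℕ) else (i:ℕ) + 1) = j
          split_ifs <;> omega
        rw [e1, e2]; exact hval
      · congr 1
        apply Fin.ext; rw [coe_succAbove, coe_succAbove]
        show (if (i:ℕ) < j then (i:ℕ) else (i:ℕ) + 1)
            = (if (i:ℕ) < j + 1 then (i:ℕ) else (i:ℕ) + 1)
        split_ifs <;> omega
    rw [hfun]
    exact addSelf _
  · refine Finset.sum_eq_zero fun p _ => ?_
    rw [xbr, dif_neg]
    rintro ⟨hsurj, -⟩
    refine hs fun k => ?_
    obtain ⟨i, hi⟩ := hsurj k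
    exact ⟨_, hi⟩

/-- Swap the two deleted positions. -/
def swapP {N : ℕ} (p : Fin (N+2)) (q : Fin (N+1)) : Fin (N+2) × Fin (N+1) :=
  ⟨p.succAbove q,
   if h : (q:ℕ) < (p:ℕ) then ⟨(p:ℕ)-1, by have := p.isLt; omega⟩
   else ⟨(p:ℕ), by have := q.isLt; omega⟩⟩

lemma swapP_comp {N : ℕ} (p : Fin (N+2)) (q : Fin (N+1)) (i : Fin N) :
    (swapP p q).1.succAbove ((swapP p q).2.succAbove i) = p.succAbove (q.succAbove i) := by
  apply Fin.ext
  simp only [swapP, coe_succAbove, apply_dite (Fin.val), Fin.val_mk]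
  have := p.isLt; have := q.isLt; have := i.isLt
  split_ifs <;> omega

lemma swapP_swapP {N : ℕ} (p : Fin (N+2)) (q : Fin (N+1)) :
    swapP (swapP p q).1 (swapP p q).2 = (p, q) := by
  have := p.isLt; have := q.isLt
  refine Prod.ext ?_ ?_ <;> apply Fin.ext <;>
    simp only [swapP, coe_succAbove, apply_dite (Fin.val), Fin.val_mk] <;>
    split_ifs <;> simp_all <;> omega

lemma double_sum_zero {r d : ℕ} (u : Fin (r + d + 2) → Fin r) :
    ∑ p : Fin (r + d + 2), ∑ q : Fin (r + d + 1),
      xbr r d (fun i : Fin (r + d) => u (p.succAbove (q.succAbove i))) = 0 := by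
  rw [← Finset.sum_product']
  refine Finset.sum_involution (fun a _ => swapP a.1 a.2) ?_ ?_
    (fun a ha => Finset.mem_univ _) ?_
  · intro a ha
    have heq : (fun i : Fin (r + d) =>
          u ((swapP a.1 a.2).1.succAbove ((swapP a.1 a.2).2.succAbove i)))
        = fun i : Fin (r + d) => u (a.1.succAbove (a.2.succAbove i)) := by
      funext i; rw [swapP_comp]
    show xbr r d _ + xbr r d _ = 0
    rw [heq]
    exact addSelf _
  · intro a ha _ hEq
    exact Fin.succAbove_ne a.1 a.2 (congrArg Prod.fst hEq)
  · intro a ha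
    show swapP (swapP a.1 a.2).1 (swapP a.1 a.2).2 = a
    rw [swapP_swapP]

lemma xbnd_xbr {r d : ℕ} (v : Fin (r + (d + 1)) → Fin r) :
    xbnd r d (xbr r (d + 1) v)
      = ∑ p : Fin (r + d + 1), xbr r d (fun i : Fin (r + d) => v (p.succAbove i)) := by
  rw [xbr]
  split_ifs with h
  · rw [xbnd, Finsupp.lsum_single, LinearMap.toSpanSingleton_apply, one_smul]
  · rw [map_zero]
    exact (sum_del_zero v h).symm

theorem stmt7 (r : ℕ) (hr : 1 ≤ r) (d : ℕ) :
    (xbnd r d).comp (xbnd r (d + 1)) = 0 := by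
  apply Finsupp.lhom_ext
  intro u b
  rw [LinearMap.comp_apply, LinearMap.zero_apply]
  have hb : (Finsupp.single u b : XMod r (d + 2)) = b • Finsupp.single u 1 := by
    rw [Finsupp.smul_single, smul_eq_mul, mul_one]
  rw [hb, map_smul, map_smul]
  suffices h : xbnd r d (xbnd r (d + 1) (Finsupp.single u 1)) = 0 by
    rw [h, smul_zero]
  have h1 : xbnd r (d + 1) (Finsupp.single u 1)
      = ∑ p : Fin (r + (d + 1) + 1), xbr r (d + 1) (fun i => u.1 (p.succAbove i)) := by
    rw [xbnd, Finsupp.lsum_single, LinearMap.toSpanSingleton_apply, one_smul]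
  rw [h1, map_sum]
  rw [Finset.sum_congr rfl fun p _ => xbnd_xbr (fun i => u.1 (p.succAbove i))]
  exact double_sum_zero u.1
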